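/- Let P_{i_1},...,P_{i_m} be all occurrences of a fixed phrase P in a rightmost-encoded LZ-like parsing of a string of length n, with distances d_{i_1},...,d_{i_m} to the rightmost previous occurrence of P (as source). Then d_{i_1} + d_{i_2} + ... + d_{i_m} ≤ n, and consequently ∑_{t=1}^m log d_{i_t} ≤ m·log(n/m). -/

import Mathlib

/-- Start position (0-based) of the `j`-th phrase of a parsing. -/
def phraseStart (P : List (List ℕ)) (j : ℕ) : ℕ := ((P.take j).flatten).length

/-- An LZ-like parsing of `T`. -/
def IsLZLike (T : List ℕ) (P : List (List ℕ)) : Prop :=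
  T = P.flatten ∧ (∀ Q ∈ P, Q ≠ []) ∧
  ∀ j, j < P.length →
    (P.getD j []).length = 1 ∨
    ∃ p, p < phraseStart P j ∧ (T.drop p).take (P.getD j []).length = P.getD j []

/-- Phrase `j` has an occurrence in `T` starting strictly before its own start. -/
def hasEarlier (T : List ℕ) (P : List (List ℕ)) (j : ℕ) : Prop :=
  ∃ p, p < phraseStart P j ∧ (T.drop p).take (P.getD j []).length = P.getD j []

/-- Distance from phrase `j` to its rightmost earlier occurrence (its rightmost source). -/
noncomputable def rightmostDist (T : List ℕ) (P : List (List ℕ)) (j : ℕ) : ℕ :=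
  phraseStart P j -
    sSup {p | p < phraseStart P j ∧ (T.drop p).take (P.getD j []).length = P.getD j []}

lemma phraseStart_mono (P : List (List ℕ)) {a b : ℕ} (hab : a ≤ b) :
    phraseStart P a ≤ phraseStart P b := by
  unfold phraseStart
  obtain ⟨c, rfl⟩ := Nat.exists_eq_add_of_le hab
  rw [List.take_add, List.flatten_append, List.length_append]
  exact Nat.le_add_right _ _

lemma phraseStart_le (P : List (List ℕ)) (j : ℕ) :
    phraseStart P j ≤ P.flatten.length := by
  conv_rhs => rw [← List.take_append_drop j P]
  rw [List.flatten_append, List.length_append]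
  exact Nat.le_add_right _ _

/-- The text starting at `phraseStart P j` begins with the `j`-th phrase. -/
lemma occ_at_start (P : List (List ℕ)) {j : ℕ} (hj : j < P.length) :
    (P.flatten.drop (phraseStart P j)).take (P.getD j []).length = P.getD j [] := by
  have h1 : P.flatten = (P.take j).flatten ++ (P.drop j).flatten := by
    rw [← List.flatten_append, List.take_append_drop]
  rw [h1]
  unfold phraseStart
  rw [List.drop_left]
  rw [List.drop_eq_getElem_cons hj, List.flatten_cons, List.getD_eq_getElem _ _ hj,
    List.take_left]

lemma phraseStart_succ (P : List (List ℕ)) {j : ℕ} (hj : j < P.length) :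
    phraseStart P (j + 1) = phraseStart P j + (P.getD j []).length := by
  unfold phraseStart
  rw [List.take_add, List.flatten_append, List.length_append]
  rw [List.drop_eq_getElem_cons hj, List.getD_eq_getElem _ _ hj,
    show List.take 1 (P[j] :: List.drop (j+1) P) = [P[j]] from rfl]
  simp

theorem rightmost_distances_sum (T : List ℕ) (P : List (List ℕ)) (hP : IsLZLike T P)
    (Q : List ℕ) (hQ : Q ≠ []) (I : Finset ℕ)
    (hI : ∀ j, j ∈ I ↔ (j < P.length ∧ P.getD j [] = Q))
    (hsrc : ∀ j ∈ I, hasEarlier T P j) :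
    (∑ j ∈ I, (rightmostDist T P j : ℝ)) ≤ (T.length : ℝ) ∧
    ∑ j ∈ I, Real.logb 2 (rightmostDist T P j) ≤
      (I.card : ℝ) * Real.logb 2 ((T.length : ℝ) / I.card) := by
  obtain ⟨hT, hne, _⟩ := hP
  set S : ℕ → Set ℕ := fun j =>
    {p | p < phraseStart P j ∧ (T.drop p).take (P.getD j []).length = P.getD j []} with hS
  -- sSup S j is itself an occurrence
  have hmem : ∀ j ∈ I, sSup (S j) ∈ S j := by
    intro j hj
    exact Nat.sSup_mem (hsrc j hj) ⟨phraseStart P j, fun x hx => le_of_lt hx.1⟩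
  have hlt : ∀ j ∈ I, sSup (S j) < phraseStart P j := fun j hj => (hmem j hj).1
  -- distances are positive
  have hdpos : ∀ j ∈ I, 1 ≤ rightmostDist T P j := by
    intro j hj
    have h1 := hlt j hj
    have h2 : rightmostDist T P j = phraseStart P j - sSup (S j) := rfl
    omega
  -- if i < j both in I, then phraseStart P i ≤ sSup (S j)
  have hchain : ∀ i ∈ I, ∀ j ∈ I, i < j → phraseStart P i ≤ sSup (S j) := by
    intro i hi j hj hij
    have hiP := (hI i).1 hi
    have hjP := (hI j).1 hj
    apply le_csSup ⟨phraseStart P j, fun x hx => le_of_lt hx.1⟩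
    constructor
    · calc phraseStart P i < phraseStart P (i + 1) := by
            rw [phraseStart_succ P hiP.1]
            have : (P.getD i []).length ≠ 0 := by
              rw [hiP.2]
              exact fun h => hQ (List.length_eq_zero_iff.1 h)
            omega
        _ ≤ phraseStart P j := phraseStart_mono P hij
    · have := occ_at_start P hiP.1
      rw [← hT] at this
      rw [hjP.2, ← hiP.2]
      exact this
  -- key telescoping bound, in ℕ
  have key : ∀ J : Finset ℕ, J ⊆ I → ∑ j ∈ J, rightmostDist T P j ≤ J.sup (phraseStart P) := by
    intro J
    induction J using Finset.induction_on_max with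
    | empty => intro _; simp
    | insert a s ha ih =>
      intro hsub
      have hsub' : s ⊆ I := fun x hx => hsub (Finset.mem_insert_of_mem hx)
      have haI : a ∈ I := hsub (Finset.mem_insert_self a s)
      have hamem : a ∉ s := fun h => lt_irrefl a (ha a h)
      rw [Finset.sum_insert hamem, Finset.sup_insert]
      have hsup : s.sup (phraseStart P) ≤ sSup (S a) := by
        apply Finset.sup_le
        intro x hx
        exact hchain x (hsub' hx) a haI (ha x hx)
      have h1 := ih hsub'
      have h2 := hlt a haI
      have : rightmostDist T P a = phraseStart P a - sSup (S a) := rfl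
      have hle : rightmostDist T P a + ∑ j ∈ s, rightmostDist T P j ≤ phraseStart P a := by
        omega
      exact le_trans hle (le_max_left _ _)
  have hsupn : I.sup (phraseStart P) ≤ T.length := by
    apply Finset.sup_le
    intro j _
    rw [hT]
    exact phraseStart_le P j
  have hsumn : ∑ j ∈ I, rightmostDist T P j ≤ T.length :=
    le_trans (key I le_rfl) hsupn
  have part1 : (∑ j ∈ I, (rightmostDist T P j : ℝ)) ≤ (T.length : ℝ) := by
    rw [← Nat.cast_sum]
    exact_mod_cast hsumn
  refine ⟨part1, ?_⟩
  -- second part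
  rcases I.eq_empty_or_nonempty with rfl | hIne
  · simp
  have hm : (0 : ℝ) < I.card := by exact_mod_cast Finset.card_pos.2 hIne
  -- Jensen for log
  have hjensen : ∑ j ∈ I, ((I.card : ℝ)⁻¹) • Real.log (rightmostDist T P j) ≤
      Real.log (∑ j ∈ I, ((I.card : ℝ)⁻¹) • (rightmostDist T P j : ℝ)) := by
    apply strictConcaveOn_log_Ioi.concaveOn.le_map_sum
    · intro i _; positivity
    · rw [Finset.sum_const, nsmul_eq_mul]
      field_simp
    · intro i hi
      have := hdpos i hi
      simp only [Set.mem_Ioi]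
      exact_mod_cast lt_of_lt_of_le zero_lt_one (by exact_mod_cast this)
  have hsum_ge : (I.card : ℝ) ≤ ∑ j ∈ I, (rightmostDist T P j : ℝ) := by
    calc (I.card : ℝ) = ∑ j ∈ I, (1 : ℝ) := by simp
      _ ≤ _ := Finset.sum_le_sum (fun i hi => by exact_mod_cast hdpos i hi)
  have havg_pos : 0 < (∑ j ∈ I, (rightmostDist T P j : ℝ)) / I.card :=
    div_pos (lt_of_lt_of_le hm hsum_ge) hm
  have hlog2 : (0 : ℝ) < Real.log 2 := Real.log_pos one_lt_two
  -- rewrite logb as log / log 2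
  have hfinal : ∑ j ∈ I, Real.log (rightmostDist T P j) ≤
      (I.card : ℝ) * Real.log ((T.length : ℝ) / I.card) := by
    have h1 : ∑ j ∈ I, Real.log (rightmostDist T P j) ≤
        (I.card : ℝ) * Real.log ((∑ j ∈ I, (rightmostDist T P j : ℝ)) / I.card) := by
      have := hjensen
      simp only [smul_eq_mul] at this
      rw [← Finset.mul_sum, ← Finset.mul_sum] at this
      have h2 : ∑ j ∈ I, Real.log (rightmostDist T P j) =
          (I.card : ℝ) * ((I.card : ℝ)⁻¹ * ∑ j ∈ I, Real.log (rightmostDist T P j)) := by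
        field_simp
      rw [h2]
      have h3 : (∑ j ∈ I, (rightmostDist T P j : ℝ)) / I.card =
          (I.card : ℝ)⁻¹ * ∑ j ∈ I, (rightmostDist T P j : ℝ) := by
        rw [div_eq_inv_mul]
      rw [h3]
      exact mul_le_mul_of_nonneg_left this (le_of_lt hm)
    refine le_trans h1 ?_
    apply mul_le_mul_of_nonneg_left _ (le_of_lt hm)
    exact Real.log_le_log havg_pos ((div_le_div_iff_of_pos_right hm).2 part1)
  -- convert to logb
  simp only [Real.logb]
  rw [← Finset.sum_div, mul_div_assoc']
  gcongr
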